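/- In the extended twisted Yangian X_N, for 1 ≤ i < j < N one has e_{i,j+1}(u) = [e_{ij}(u), e_{j,j+1}^{(1)}] and f_{j+1,i}(u) = [f_{j+1,j}^{(1)}, f_{ji}(u)]. Consequently, X_N (and likewise the twisted Yangian Y_N) is generated by the coefficients of d_i(u) (1 ≤ i ≤ N), e_j(u), and f_j(u) (1 ≤ j < N). -/

import Mathlib

noncomputable section

namespace TY

variable {A : Type*} [Ring A] [Algebra ℂ A]

/-- For `f(u) = Σ_{r≥0} a_r u^{-r}` (recorded as the power series `Σ a_r x^r` in
`x = u⁻¹`), this is the series `f(-u)`. -/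
def negVar (f : PowerSeries A) : PowerSeries A :=
  PowerSeries.mk fun n => ((-1 : ℂ) ^ n) • PowerSeries.coeff n f

/-- For `f(u) = Σ_{r≥0} a_r u^{-r}`, this is the series `f(u + c)`, expanded again
in powers of `u⁻¹`. -/
def shiftVar (c : ℂ) (f : PowerSeries A) : PowerSeries A :=
  PowerSeries.mk fun n => ∑ r ∈ Finset.range (n + 1),
    ((-1 : ℂ) ^ (n - r) * ((n - 1).choose (n - r) : ℂ) * c ^ (n - r)) •
      PowerSeries.coeff r f

open Classical in
/-- A series in the single variable `u⁻¹`, viewed as a two-variable series placed in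
the `k`-th variable. -/
def inVar (k : Fin 2) (f : PowerSeries A) : MvPowerSeries (Fin 2) A := fun m =>
  if m = Finsupp.single k (m k) then PowerSeries.coeff (m k) f else 0

/-- `f(u)` as a series in the two variables `x = u⁻¹`, `y = v⁻¹`. -/
abbrev inX (f : PowerSeries A) : MvPowerSeries (Fin 2) A := inVar 0 f

/-- `f(v)` as a series in the two variables `x = u⁻¹`, `y = v⁻¹`. -/
abbrev inY (f : PowerSeries A) : MvPowerSeries (Fin 2) A := inVar 1 f

/-- `x = u⁻¹` as a two-variable series. -/
def Xv : MvPowerSeries (Fin 2) A := MvPowerSeries.X 0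

/-- `y = v⁻¹` as a two-variable series. -/
def Yv : MvPowerSeries (Fin 2) A := MvPowerSeries.X 1

/-- The left-hand side `(u²-v²)[s_{ij}(u), s_{kl}(v)]` of the quaternary relation,
multiplied by `x²y²` (where `x = u⁻¹`, `y = v⁻¹`) to clear negative powers. -/
def quatLHS {N : ℕ} (s : Fin N → Fin N → PowerSeries A) (i j k l : Fin N) :
    MvPowerSeries (Fin 2) A :=
  (Yv ^ 2 - Xv ^ 2) * ⁅inX (s i j), inY (s k l)⁆

/-- The right-hand side of the quaternary relation, multiplied by `x²y²`. -/
def quatRHS {N : ℕ} (s : Fin N → Fin N → PowerSeries A) (i j k l : Fin N) :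
    MvPowerSeries (Fin 2) A :=
  Xv * Yv * (Xv + Yv) * (inX (s k j) * inY (s i l) - inY (s k j) * inX (s i l))
    - Xv * Yv * (Yv - Xv) * (inX (s i k) * inY (s j l) - inY (s k i) * inX (s l j))
    + Xv ^ 2 * Yv ^ 2 * (inX (s k i) * inY (s j l) - inY (s k i) * inX (s j l))

/-- The quaternary relation (2.2). -/
def QuatRel {N : ℕ} (s : Fin N → Fin N → PowerSeries A) : Prop :=
  ∀ i j k l : Fin N, quatLHS s i j k l = quatRHS s i j k l

/-- `s_{ij}(u) = δ_{ij} + Σ_{r≥1} s_{ij}^{(r)} u^{-r}`. -/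
def HasDeltaConst {N : ℕ} (s : Fin N → Fin N → PowerSeries A) : Prop :=
  ∀ i j : Fin N, PowerSeries.constantCoeff (s i j) = if i = j then 1 else 0

/-- The symmetry relation `s_{ji}(-u) = s_{ij}(u) + (s_{ij}(u) - s_{ij}(-u))/(2u)`. -/
def SymRel {N : ℕ} (s : Fin N → Fin N → PowerSeries A) : Prop :=
  ∀ i j : Fin N,
    negVar (s j i)
      = s i j + (2 : ℂ)⁻¹ • (PowerSeries.X * (s i j - negVar (s i j)))

/-- The upper unitriangular matrix `E(u)` with entries `e_{ij}(u)`, `i < j`. -/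
def upperMat {N : ℕ} (e : Fin N → Fin N → PowerSeries A) :
    Matrix (Fin N) (Fin N) (PowerSeries A) :=
  Matrix.of fun i j => if i = j then 1 else if i < j then e i j else 0

/-- The lower unitriangular matrix `F(u)` with entries `f_{ji}(u)`, `i < j`. -/
def lowerMat {N : ℕ} (f : Fin N → Fin N → PowerSeries A) :
    Matrix (Fin N) (Fin N) (PowerSeries A) :=
  Matrix.of fun i j => if i = j then 1 else if j < i then f i j else 0

/-- The (unique) Gauss decomposition `S(u) = F(u) D(u) E(u)`: `D(u)` diagonal with
entries `d_i(u)` having constant term `1`, `E(u)` upper unitriangular with entries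
`e_{ij}(u)` (for `i < j`), `F(u)` lower unitriangular with entries `f_{ji}(u)`. -/
structure IsGaussDecomp {N : ℕ} (s : Fin N → Fin N → PowerSeries A)
    (d : Fin N → PowerSeries A) (e f : Fin N → Fin N → PowerSeries A) : Prop where
  d_const : ∀ i, PowerSeries.constantCoeff (d i) = 1
  e_const : ∀ i j : Fin N, i < j → PowerSeries.constantCoeff (e i j) = 0
  f_const : ∀ i j : Fin N, i < j → PowerSeries.constantCoeff (f j i) = 0
  decomp : Matrix.of s = lowerMat f * Matrix.diagonal d * upperMat e

/-- `b_{ji}(u) = f_{ji}(u - i/2)`; the indices `j i` here are 0-based, so the paper's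
(1-based) index `i` equals `(i : ℕ) + 1`. -/
def bSeriesAt {N : ℕ} (f : Fin N → Fin N → PowerSeries A) (j i : Fin N) :
    PowerSeries A :=
  shiftVar (-(((i : ℕ) : ℂ) + 1) / 2) (f j i)

/-- `h_0(u) = d_1(u)` and, for `k ≥ 1`, `h_k(u) = d̃_k(u - k/2) d_{k+1}(u - k/2)`;
the index `k` here is the paper's index, while the entries of `d`, `dt` are indexed
0-based (so the paper's `d_m` is `d ⟨m-1⟩`). -/
def hSeriesAt {N : ℕ} (d dt : Fin N → PowerSeries A) (k : Fin N) :
    PowerSeries A :=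
  if _h : (k : ℕ) = 0 then d k
  else
    shiftVar (-((k : ℕ) : ℂ) / 2) (dt ⟨(k : ℕ) - 1, by have := k.isLt; omega⟩) *
      shiftVar (-((k : ℕ) : ℂ) / 2) (d k)

/-- The free algebra on the generators `s_{ij}^{(r)}`, `r ≥ 1` (the triple
`(i, j, n)` encodes `s_{ij}^{(n+1)}`). -/
abbrev FA (N : ℕ) := FreeAlgebra ℂ (Fin N × Fin N × ℕ)

/-- The generating series `s_{ij}(u)` of the free algebra. -/
def sFree (N : ℕ) (i j : Fin N) : PowerSeries (FA N) :=
  PowerSeries.mk fun r =>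
    match r with
    | 0 => if i = j then 1 else 0
    | n + 1 => FreeAlgebra.ι ℂ (i, j, n)

/-- The defining relations of the extended twisted Yangian `X_N`: all coefficients
of the quaternary relations. -/
inductive XRel (N : ℕ) : FA N → FA N → Prop
  | quat (i j k l : Fin N) (m : Fin 2 →₀ ℕ) :
      XRel N (MvPowerSeries.coeff m (quatLHS (sFree N) i j k l))
        (MvPowerSeries.coeff m (quatRHS (sFree N) i j k l))

/-- The extended twisted Yangian `X_N`. -/
abbrev Xt (N : ℕ) := RingQuot (XRel N)

/-- The generating series `s_{ij}(u)` of `X_N`. -/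
def sX (N : ℕ) (i j : Fin N) : PowerSeries (Xt N) :=
  PowerSeries.map (RingQuot.mkRingHom (XRel N)) (sFree N i j)

/-- The defining relations of the twisted Yangian `Y_N`: the quaternary relations
together with the symmetry relation `s_{11}(u) = s_{11}(-u)`. -/
inductive YRel (N : ℕ) : FA N → FA N → Prop
  | quat (i j k l : Fin N) (m : Fin 2 →₀ ℕ) :
      YRel N (MvPowerSeries.coeff m (quatLHS (sFree N) i j k l))
        (MvPowerSeries.coeff m (quatRHS (sFree N) i j k l))
  | symm (h : 0 < N) (n : ℕ) :
      YRel N (PowerSeries.coeff n (sFree N ⟨0, h⟩ ⟨0, h⟩))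
        (PowerSeries.coeff n (negVar (sFree N ⟨0, h⟩ ⟨0, h⟩)))

/-- The twisted Yangian `Y_N`. -/
abbrev Yt (N : ℕ) := RingQuot (YRel N)

/-- The generating series `s_{ij}(u)` of `Y_N`. -/
def sY (N : ℕ) (i j : Fin N) : PowerSeries (Yt N) :=
  PowerSeries.map (RingQuot.mkRingHom (YRel N)) (sFree N i j)

/-- `x` is fixed by every (auto)morphism `ν_g : S(u) ↦ g(u) S(u)` of `Y_N`, where
`g(u) ∈ 1 + u⁻²ℂ[[u⁻²]]`. -/
def SYcond (N : ℕ) (x : Yt N) : Prop :=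
  ∀ (φ : Yt N →ₐ[ℂ] Yt N) (g : PowerSeries ℂ),
    PowerSeries.constantCoeff g = 1 →
    (∀ n : ℕ, PowerSeries.coeff (2 * n + 1) g = 0) →
    (∀ i j : Fin N,
      PowerSeries.map (φ : Yt N →+* Yt N) (sY N i j)
        = PowerSeries.map (algebraMap ℂ (Yt N)) g * sY N i j) →
    φ x = x

/-- The special twisted Yangian `SY_N`, as the subalgebra of `Y_N` of elements
stable under all automorphisms `ν_g`. -/
def specialSubalgebra (N : ℕ) : Subalgebra ℂ (Yt N) where
  carrier := {x | SYcond N x}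
  mul_mem' := fun ha hb φ g h1 h2 h3 => by
    rw [map_mul, ha φ g h1 h2 h3, hb φ g h1 h2 h3]
  one_mem' := fun φ _ _ _ _ => map_one φ
  add_mem' := fun ha hb φ g h1 h2 h3 => by
    rw [map_add, ha φ g h1 h2 h3, hb φ g h1 h2 h3]
  zero_mem' := fun φ _ _ _ _ => map_zero φ
  algebraMap_mem' := fun c φ _ _ _ _ => φ.commutes c

/-- `x < y` for an explicitly given linear order. -/
def ltOf {G : Type*} (L : LinearOrder G) (x y : G) : Prop :=
  L.toPartialOrder.toPreorder.toLT.lt x y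

/-- The ordered monomial attached to a finitely supported exponent function `m`,
with the generators multiplied in increasing order relative to the linear order
`L`. -/
def orderedMonomial {R : Type*} [Ring R] {G : Type*} (L : LinearOrder G)
    (elem : G → R) (m : G →₀ ℕ) : R :=
  letI := L
  ((m.support.sort (· ≤ ·)).map fun g => elem g ^ m g).prod
set_option linter.unusedSectionVars false
-- auxiliary
def m2 (p q : ℕ) : Fin 2 →₀ ℕ := Finsupp.single 0 p + Finsupp.single 1 q

lemma m2_apply0 (p q : ℕ) : m2 p q 0 = p := by simp [m2, Finsupp.single_apply]
lemma m2_apply1 (p q : ℕ) : m2 p q 1 = q := by simp [m2, Finsupp.single_apply]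

lemma fin2_eq (m : Fin 2 →₀ ℕ) : m = m2 (m 0) (m 1) := by
  ext a
  fin_cases a <;> simp [m2, Finsupp.single_apply]

lemma coeff_inVar (k : Fin 2) (f : PowerSeries A) (m : Fin 2 →₀ ℕ) :
    MvPowerSeries.coeff m (inVar k f) =
      if m = Finsupp.single k (m k) then PowerSeries.coeff (m k) f else 0 := by
  classical
  simp [inVar, MvPowerSeries.coeff]
  congr

lemma coeff_inVar_single (k : Fin 2) (f : PowerSeries A) (n : ℕ) :
    MvPowerSeries.coeff (Finsupp.single k n) (inVar k f) = PowerSeries.coeff n f := by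
  rw [coeff_inVar]
  simp

lemma coeff_inX_mul_inY (f g : PowerSeries A) (m : Fin 2 →₀ ℕ) :
    MvPowerSeries.coeff m (inX f * inY g)
      = PowerSeries.coeff (m 0) f * PowerSeries.coeff (m 1) g := by
  classical
  rw [MvPowerSeries.coeff_mul]
  rw [Finset.sum_eq_single (Finsupp.single (0 : Fin 2) (m 0), Finsupp.single (1 : Fin 2) (m 1))]
  · rw [coeff_inVar_single, coeff_inVar_single]
  · rintro ⟨p, q⟩ hmem hne
    rw [Finset.HasAntidiagonal.mem_antidiagonal] at hmem
    by_cases hp : p = Finsupp.single (0:Fin 2) (p 0)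
    · by_cases hq : q = Finsupp.single (1:Fin 2) (q 1)
      · exfalso; apply hne
        have h0 : p 0 + q 0 = m 0 := by rw [← hmem]; rfl
        have h1 : p 1 + q 1 = m 1 := by rw [← hmem]; rfl
        have hq0 : q 0 = 0 := by rw [hq]; simp [Finsupp.single_apply]
        have hp1 : p 1 = 0 := by rw [hp]; simp [Finsupp.single_apply]
        have hpm : p 0 = m 0 := by omega
        have hqm : q 1 = m 1 := by omega
        rw [Prod.ext_iff]
        exact ⟨hp.trans (by rw [hpm]), hq.trans (by rw [hqm])⟩
      · rw [coeff_inVar (1:Fin 2) g q, if_neg hq, mul_zero]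
    · rw [coeff_inVar (0:Fin 2) f p, if_neg hp, zero_mul]
  · intro hmem
    exfalso; apply hmem
    rw [Finset.HasAntidiagonal.mem_antidiagonal]
    have := fin2_eq m
    simpa [m2] using this.symm

lemma coeff_inY_mul_inX (f g : PowerSeries A) (m : Fin 2 →₀ ℕ) :
    MvPowerSeries.coeff m (inY f * inX g)
      = PowerSeries.coeff (m 1) f * PowerSeries.coeff (m 0) g := by
  classical
  rw [MvPowerSeries.coeff_mul]
  rw [Finset.sum_eq_single (Finsupp.single (1 : Fin 2) (m 1), Finsupp.single (0 : Fin 2) (m 0))]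
  · rw [coeff_inVar_single, coeff_inVar_single]
  · rintro ⟨p, q⟩ hmem hne
    rw [Finset.HasAntidiagonal.mem_antidiagonal] at hmem
    by_cases hp : p = Finsupp.single (1:Fin 2) (p 1)
    · by_cases hq : q = Finsupp.single (0:Fin 2) (q 0)
      · exfalso; apply hne
        have h0 : p 0 + q 0 = m 0 := by rw [← hmem]; rfl
        have h1 : p 1 + q 1 = m 1 := by rw [← hmem]; rfl
        have hq1 : q 1 = 0 := by rw [hq]; simp [Finsupp.single_apply]
        have hp0 : p 0 = 0 := by rw [hp]; simp [Finsupp.single_apply]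
        have hpm : p 1 = m 1 := by omega
        have hqm : q 0 = m 0 := by omega
        rw [Prod.ext_iff]
        exact ⟨hp.trans (by rw [hpm]), hq.trans (by rw [hqm])⟩
      · rw [coeff_inVar (0:Fin 2) g q, if_neg hq, mul_zero]
    · rw [coeff_inVar (1:Fin 2) f p, if_neg hp, zero_mul]
  · intro hmem
    exfalso; apply hmem
    rw [Finset.HasAntidiagonal.mem_antidiagonal]
    have := fin2_eq m
    rw [this]
    ext a
    fin_cases a <;> simp [m2, Finsupp.single_apply]

lemma XvYv_pow (a b : ℕ) :
    (Xv ^ a * Yv ^ b : MvPowerSeries (Fin 2) A) = MvPowerSeries.monomial (m2 a b) 1 := by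
  rw [Xv, Yv, MvPowerSeries.X_pow_eq, MvPowerSeries.X_pow_eq, MvPowerSeries.monomial_mul_monomial,
    one_mul, m2]

lemma m2_le (a b p q : ℕ) : m2 a b ≤ m2 p q ↔ a ≤ p ∧ b ≤ q := by
  constructor
  · intro h
    exact ⟨by simpa [m2_apply0] using h 0, by simpa [m2_apply1] using h 1⟩
  · rintro ⟨h1, h2⟩ i
    fin_cases i <;> simpa [m2_apply0, m2_apply1]

lemma m2_sub (a b p q : ℕ) : m2 p q - m2 a b = m2 (p - a) (q - b) := by
  ext i
  fin_cases i <;> simp [Finsupp.tsub_apply, m2_apply0, m2_apply1]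

lemma coeff_XY_mul (a b p q : ℕ) (h : MvPowerSeries (Fin 2) A) :
    MvPowerSeries.coeff (m2 p q) (Xv ^ a * Yv ^ b * h)
      = if a ≤ p ∧ b ≤ q then MvPowerSeries.coeff (m2 (p - a) (q - b)) h else 0 := by
  classical
  rw [XvYv_pow, MvPowerSeries.coeff_monomial_mul]
  by_cases hc : a ≤ p ∧ b ≤ q
  · rw [if_pos ((m2_le a b p q).mpr hc), if_pos hc, m2_sub, one_mul]
  · rw [if_neg (fun h => hc ((m2_le a b p q).mp h)), if_neg hc]


lemma star_coeff {N : ℕ} (s : Fin N → Fin N → PowerSeries A)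
    (hconst : HasDeltaConst s) (hquat : QuatRel s) (i j k l : Fin N) (p : ℕ) :
    PowerSeries.coeff p (s i j) * PowerSeries.coeff 1 (s k l)
      - PowerSeries.coeff 1 (s k l) * PowerSeries.coeff p (s i j)
    = (if k = j then PowerSeries.coeff p (s i l) else 0)
      - (if i = l then PowerSeries.coeff p (s k j) else 0)
      + (if k = i then PowerSeries.coeff p (s l j) else 0)
      - (if j = l then PowerSeries.coeff p (s i k) else 0) := by
  have h := congrArg (MvPowerSeries.coeff (m2 (p + 2) 1)) (hquat i j k l)
  have expandL : quatLHS s i j k l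
      = Xv ^ 0 * Yv ^ 2 * (inX (s i j) * inY (s k l))
        - Xv ^ 0 * Yv ^ 2 * (inY (s k l) * inX (s i j))
        - Xv ^ 2 * Yv ^ 0 * (inX (s i j) * inY (s k l))
        + Xv ^ 2 * Yv ^ 0 * (inY (s k l) * inX (s i j)) := by
    rw [quatLHS, Ring.lie_def]; noncomm_ring
  have expandR : quatRHS s i j k l
      = Xv ^ 2 * Yv ^ 1 * (inX (s k j) * inY (s i l))
        - Xv ^ 2 * Yv ^ 1 * (inY (s k j) * inX (s i l))
        + Xv ^ 1 * Yv ^ 2 * (inX (s k j) * inY (s i l))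
        - Xv ^ 1 * Yv ^ 2 * (inY (s k j) * inX (s i l))
        - Xv ^ 1 * Yv ^ 2 * (inX (s i k) * inY (s j l))
        + Xv ^ 1 * Yv ^ 2 * (inY (s k i) * inX (s l j))
        + Xv ^ 2 * Yv ^ 1 * (inX (s i k) * inY (s j l))
        - Xv ^ 2 * Yv ^ 1 * (inY (s k i) * inX (s l j))
        + Xv ^ 2 * Yv ^ 2 * (inX (s k i) * inY (s j l))
        - Xv ^ 2 * Yv ^ 2 * (inY (s k i) * inX (s j l)) := by
    have comm : (Yv * Xv : MvPowerSeries (Fin 2) A) = Xv * Yv := by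
      rw [Xv, Yv, MvPowerSeries.X, MvPowerSeries.X, MvPowerSeries.monomial_mul_monomial,
        MvPowerSeries.monomial_mul_monomial, add_comm]
    have m1 : (Xv * Yv * (Xv + Yv) : MvPowerSeries (Fin 2) A)
        = Xv ^ 2 * Yv ^ 1 + Xv ^ 1 * Yv ^ 2 := by
      rw [mul_add, mul_assoc Xv Yv Xv, comm]; noncomm_ring
    have m2' : (Xv * Yv * (Yv - Xv) : MvPowerSeries (Fin 2) A)
        = Xv ^ 1 * Yv ^ 2 - Xv ^ 2 * Yv ^ 1 := by
      rw [mul_sub, mul_assoc Xv Yv Xv, comm]; noncomm_ring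
    rw [quatRHS, m1, m2']; noncomm_ring
  rw [expandL, expandR] at h
  have c1 : ¬ ((0:ℕ) ≤ p + 2 ∧ 2 ≤ 1) := by omega
  have c2 : (2:ℕ) ≤ p + 2 ∧ 0 ≤ 1 := by omega
  have c3 : (2:ℕ) ≤ p + 2 ∧ 1 ≤ 1 := by omega
  have c4 : ¬ ((1:ℕ) ≤ p + 2 ∧ 2 ≤ 1) := by omega
  have c5 : ¬ ((2:ℕ) ≤ p + 2 ∧ 2 ≤ 1) := by omega
  simp only [map_sub, map_add, coeff_XY_mul, if_neg c1, if_pos c2, if_pos c3, if_neg c4,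
    if_neg c5, coeff_inX_mul_inY, coeff_inY_mul_inX, m2_apply0, m2_apply1,
    Nat.add_sub_cancel, Nat.sub_self, Nat.sub_zero] at h
  have hd : ∀ a b : Fin N, PowerSeries.constantCoeff (s a b) = if a = b then 1 else 0 :=
    hconst
  simp only [PowerSeries.coeff_zero_eq_constantCoeff, hd, mul_ite, mul_one, mul_zero,
    ite_mul, one_mul, zero_mul] at h
  rw [show PowerSeries.coeff p (s i j) * PowerSeries.coeff 1 (s k l)
        - PowerSeries.coeff 1 (s k l) * PowerSeries.coeff p (s i j)
      = -(0 - 0 - PowerSeries.coeff p (s i j) * PowerSeries.coeff 1 (s k l)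
          + PowerSeries.coeff 1 (s k l) * PowerSeries.coeff p (s i j)) by abel, h]
  abel

lemma lowerMat_apply {N : ℕ} (f : Fin N → Fin N → PowerSeries A) (a b : Fin N) :
    lowerMat f a b = if a = b then 1 else if b < a then f a b else 0 := rfl

lemma upperMat_apply {N : ℕ} (e : Fin N → Fin N → PowerSeries A) (a b : Fin N) :
    upperMat e a b = if a = b then 1 else if a < b then e a b else 0 := rfl

lemma star_series {N : ℕ} (s : Fin N → Fin N → PowerSeries A)
    (hconst : HasDeltaConst s) (hquat : QuatRel s) (i j k l : Fin N) :
    s i j * PowerSeries.C (PowerSeries.coeff 1 (s k l))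
      - PowerSeries.C (PowerSeries.coeff 1 (s k l)) * s i j
    = (if k = j then s i l else 0) - (if i = l then s k j else 0)
      + (if k = i then s l j else 0) - (if j = l then s i k else 0) := by
  ext p
  simp only [map_sub, map_add, PowerSeries.coeff_mul_C, PowerSeries.coeff_C_mul,
    apply_ite (PowerSeries.coeff p), map_zero]
  exact star_coeff s hconst hquat i j k l p

lemma gauss_entry {N : ℕ} {s : Fin N → Fin N → PowerSeries A} {d : Fin N → PowerSeries A}
    {e f : Fin N → Fin N → PowerSeries A} (hG : IsGaussDecomp s d e f) (a b : Fin N) :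
    s a b = ∑ c : Fin N, lowerMat f a c * d c * upperMat e c b := by
  have h := congrFun (congrFun hG.decomp a) b
  rw [Matrix.of_apply] at h
  rw [h, Matrix.mul_apply]
  refine Finset.sum_congr rfl fun c _ => ?_
  rw [Matrix.mul_diagonal]

lemma gauss_repr1 {N : ℕ} {s : Fin N → Fin N → PowerSeries A} {d : Fin N → PowerSeries A}
    {e f : Fin N → Fin N → PowerSeries A} (hG : IsGaussDecomp s d e f) (a b : Fin N) :
    s a b = (∑ c ∈ Finset.Iio a, f a c * d c * upperMat e c b) + d a * upperMat e a b := by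
  rw [gauss_entry hG a b,
    ← Finset.sum_subset (Finset.subset_univ (Finset.Iic a)) (fun c _ hc => by
      rw [Finset.mem_Iic, not_le] at hc
      rw [lowerMat_apply, if_neg (by omega : ¬ a = c),
        if_neg (by omega : ¬ c < a), zero_mul, zero_mul]),
    ← Finset.Iio_insert, Finset.sum_insert (Finset.notMem_Iio_self)]
  rw [lowerMat_apply, if_pos rfl, one_mul, add_comm]
  congr 1
  refine Finset.sum_congr rfl fun c hc => ?_
  rw [Finset.mem_Iio] at hc
  rw [lowerMat_apply, if_neg (by omega : ¬ a = c), if_pos hc]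

lemma gauss_repr2 {N : ℕ} {s : Fin N → Fin N → PowerSeries A} {d : Fin N → PowerSeries A}
    {e f : Fin N → Fin N → PowerSeries A} (hG : IsGaussDecomp s d e f) (a b : Fin N) :
    s a b = (∑ c ∈ Finset.Iio b, lowerMat f a c * d c * e c b) + lowerMat f a b * d b := by
  rw [gauss_entry hG a b,
    ← Finset.sum_subset (Finset.subset_univ (Finset.Iic b)) (fun c _ hc => by
      rw [Finset.mem_Iic, not_le] at hc
      rw [upperMat_apply, if_neg (by omega : ¬ c = b),
        if_neg (by omega : ¬ c < b), mul_zero]),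
    ← Finset.Iio_insert, Finset.sum_insert (Finset.notMem_Iio_self)]
  rw [upperMat_apply, if_pos rfl, mul_one, add_comm]
  congr 1
  refine Finset.sum_congr rfl fun c hc => ?_
  rw [Finset.mem_Iio] at hc
  rw [upperMat_apply, if_neg (by omega : ¬ c = b), if_pos hc]

lemma d_isUnit {N : ℕ} {s : Fin N → Fin N → PowerSeries A} {d : Fin N → PowerSeries A}
    {e f : Fin N → Fin N → PowerSeries A} (hG : IsGaussDecomp s d e f) (c : Fin N) :
    IsUnit (d c) := by
  rw [MvPowerSeries.isUnit_iff_constantCoeff]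
  exact hG.d_const c ▸ isUnit_one

lemma delta_right (z p q : PowerSeries A) (hp : Commute z p) :
    p * q * z - z * (p * q) = p * (q * z - z * q) := by
  rw [mul_sub, mul_assoc, ← mul_assoc z p q, hp.eq, mul_assoc]

lemma delta_right3 (z p q r : PowerSeries A) (hp : Commute z p) (hq : Commute z q) :
    p * q * r * z - z * (p * q * r) = p * q * (r * z - z * r) := by
  have h := delta_right z (p * q) r (hp.mul_right hq)
  rw [h]

lemma delta_left (z p q : PowerSeries A) (hq : Commute z q) :
    z * (p * q) - p * q * z = (z * p - p * z) * q := by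
  rw [sub_mul, ← mul_assoc, mul_assoc p q z, ← hq.eq, ← mul_assoc]

lemma delta_left3 (z p q r : PowerSeries A) (hq : Commute z q) (hr : Commute z r) :
    z * (p * q * r) - p * q * r * z = (z * p - p * z) * q * r := by
  rw [mul_assoc p q r, delta_left z p (q * r) (hq.mul_right hr), ← mul_assoc]

lemma key_comm {N : ℕ} {s : Fin N → Fin N → PowerSeries A} {d : Fin N → PowerSeries A}
    {e f : Fin N → Fin N → PowerSeries A} (hG : IsGaussDecomp s d e f)
    (z : PowerSeries A) (j : Fin N)
    (hz : ∀ a b : Fin N, (a : ℕ) < (j : ℕ) → (b : ℕ) < (j : ℕ) → Commute z (s a b)) :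
    ∀ c : Fin N, (c : ℕ) < (j : ℕ) →
      Commute z (d c)
      ∧ (∀ b : Fin N, c < b → (b : ℕ) < (j : ℕ) → Commute z (e c b))
      ∧ (∀ a : Fin N, c < a → (a : ℕ) < (j : ℕ) → Commute z (f a c)) := by
  suffices H : ∀ n : ℕ, ∀ c : Fin N, (c : ℕ) = n → (c : ℕ) < (j : ℕ) →
      Commute z (d c)
      ∧ (∀ b : Fin N, c < b → (b : ℕ) < (j : ℕ) → Commute z (e c b))
      ∧ (∀ a : Fin N, c < a → (a : ℕ) < (j : ℕ) → Commute z (f a c)) by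
    intro c hc; exact H (c : ℕ) c rfl hc
  intro n
  induction n using Nat.strong_induction_on with
  | _ n IH =>
    intro c hcn hcj
    have hsum : Commute z (∑ c' ∈ Finset.Iio c, f c c' * d c' * upperMat e c' c) := by
      apply Commute.sum_right
      intro c' hc'
      rw [Finset.mem_Iio] at hc'
      have hc'j : (c' : ℕ) < (j : ℕ) := lt_trans hc' hcj
      obtain ⟨hd', he', hf'⟩ := IH (c' : ℕ) (by omega) c' rfl hc'j
      rw [upperMat_apply, if_neg (Fin.ne_of_lt hc'), if_pos hc']
      exact ((hf' c hc' hcj).mul_right hd').mul_right (he' c hc' hcj)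
    have hd : Commute z (d c) := by
      have hrepr := gauss_repr1 hG c c
      rw [upperMat_apply, if_pos rfl, mul_one] at hrepr
      have hdc : d c = s c c - ∑ c' ∈ Finset.Iio c, f c c' * d c' * upperMat e c' c := by
        rw [hrepr]; abel
      rw [hdc]
      exact (hz c c hcj hcj).sub_right hsum
    refine ⟨hd, ?_, ?_⟩
    · intro b hcb hbj
      have hrepr := gauss_repr1 hG c b
      rw [upperMat_apply, if_neg (Fin.ne_of_lt hcb), if_pos hcb] at hrepr
      have hsum' : Commute z (∑ c' ∈ Finset.Iio c, f c c' * d c' * upperMat e c' b) := by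
        apply Commute.sum_right
        intro c' hc'
        rw [Finset.mem_Iio] at hc'
        have hc'j : (c' : ℕ) < (j : ℕ) := lt_trans hc' hcj
        obtain ⟨hd', he', hf'⟩ := IH (c' : ℕ) (by omega) c' rfl hc'j
        rw [upperMat_apply, if_neg (Fin.ne_of_lt (lt_trans hc' hcb)),
          if_pos (lt_trans hc' hcb)]
        exact ((hf' c hc' hcj).mul_right hd').mul_right (he' b (lt_trans hc' hcb) hbj)
      have h2 : Commute z (d c * e c b) := by
        have hdc : d c * e c b
            = s c b - ∑ c' ∈ Finset.Iio c, f c c' * d c' * upperMat e c' b := by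
          rw [hrepr]; abel
        rw [hdc]
        exact (hz c b hcj hbj).sub_right hsum'
      have hu := d_isUnit hG c
      have h3 : d c * (z * e c b) = d c * (e c b * z) := by
        rw [← mul_assoc, ← hd.eq, mul_assoc, h2.eq, mul_assoc]
      exact hu.mul_left_cancel h3
    · intro a hca haj
      have hrepr := gauss_repr2 hG a c
      rw [lowerMat_apply, if_neg (Ne.symm (Fin.ne_of_lt hca)), if_pos hca] at hrepr
      have hsum' : Commute z (∑ c' ∈ Finset.Iio c, lowerMat f a c' * d c' * e c' c) := by
        apply Commute.sum_right
        intro c' hc'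
        rw [Finset.mem_Iio] at hc'
        have hc'j : (c' : ℕ) < (j : ℕ) := lt_trans hc' hcj
        obtain ⟨hd', he', hf'⟩ := IH (c' : ℕ) (by omega) c' rfl hc'j
        rw [lowerMat_apply, if_neg (Ne.symm (Fin.ne_of_lt (lt_trans hc' hca))),
          if_pos (lt_trans hc' hca)]
        exact ((hf' a (lt_trans hc' hca) haj).mul_right hd').mul_right (he' c hc' hcj)
      have h2 : Commute z (f a c * d c) := by
        have hdc : f a c * d c
            = s a c - ∑ c' ∈ Finset.Iio c, lowerMat f a c' * d c' * e c' c := by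
          rw [hrepr]; abel
        rw [hdc]
        exact (hz a c haj hcj).sub_right hsum'
      have hu := d_isUnit hG c
      have h3 : (z * f a c) * d c = (f a c * z) * d c := by
        rw [mul_assoc, h2.eq, mul_assoc, ← hd.eq, ← mul_assoc]
      exact hu.mul_right_cancel h3

lemma e_step {N : ℕ} {s : Fin N → Fin N → PowerSeries A} {d : Fin N → PowerSeries A}
    {e f : Fin N → Fin N → PowerSeries A}
    (hconst : HasDeltaConst s) (hquat : QuatRel s) (hG : IsGaussDecomp s d e f)
    (j j1 : Fin N) (hjj1 : (j1 : ℕ) = (j : ℕ) + 1) :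
    ∀ i : Fin N, i < j →
      e i j * PowerSeries.C (PowerSeries.coeff 1 (s j j1))
        - PowerSeries.C (PowerSeries.coeff 1 (s j j1)) * e i j = e i j1 := by
  set z := PowerSeries.C (PowerSeries.coeff 1 (s j j1)) with hzdef
  have hz : ∀ a b : Fin N, (a : ℕ) < (j : ℕ) → (b : ℕ) < (j : ℕ) → Commute z (s a b) := by
    intro a b ha hb
    have hst := star_series s hconst hquat a b j j1
    rw [if_neg (Fin.ne_of_val_ne (by omega)), if_neg (Fin.ne_of_val_ne (by omega)),
      if_neg (Fin.ne_of_val_ne (by omega)), if_neg (Fin.ne_of_val_ne (by omega))] at hst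
    have : s a b * z = z * s a b := by
      have h0 := sub_eq_zero.mp (by rw [hst]; abel)
      exact h0
    exact this.symm
  have key := key_comm hG z j hz
  suffices H : ∀ n : ℕ, ∀ i : Fin N, (i : ℕ) = n → i < j →
      e i j * z - z * e i j = e i j1 by
    intro i hij; exact H (i : ℕ) i rfl hij
  intro n
  induction n using Nat.strong_induction_on with
  | _ n IH =>
    intro i hin hij
    have hijv : (i : ℕ) < (j : ℕ) := Fin.lt_def.mp hij
    have hij1 : i < j1 := Fin.lt_def.mpr (by omega)
    have hdelta : s i j * z - z * s i j = s i j1 := by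
      have hst := star_series s hconst hquat i j j j1
      rw [if_pos rfl, if_neg (Fin.ne_of_val_ne (by omega)),
        if_neg (Fin.ne_of_val_ne (by omega)), if_neg (Fin.ne_of_val_ne (by omega))] at hst
      rw [hst]; abel
    have r1 := gauss_repr1 hG i j
    rw [upperMat_apply, if_neg (Fin.ne_of_lt hij), if_pos hij] at r1
    have r1' : s i j = (∑ c ∈ Finset.Iio i, f i c * d c * e c j) + d i * e i j := by
      rw [r1]
      congr 1
      refine Finset.sum_congr rfl fun c hc => ?_
      rw [Finset.mem_Iio] at hc
      rw [upperMat_apply, if_neg (Fin.ne_of_lt (lt_trans hc hij)), if_pos (lt_trans hc hij)]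
    have r2 := gauss_repr1 hG i j1
    rw [upperMat_apply, if_neg (Fin.ne_of_lt hij1), if_pos hij1] at r2
    have r2' : s i j1 = (∑ c ∈ Finset.Iio i, f i c * d c * e c j1) + d i * e i j1 := by
      rw [r2]
      congr 1
      refine Finset.sum_congr rfl fun c hc => ?_
      rw [Finset.mem_Iio] at hc
      rw [upperMat_apply, if_neg (Fin.ne_of_lt (lt_trans hc hij1)), if_pos (lt_trans hc hij1)]
    have expand : s i j * z - z * s i j
        = (∑ c ∈ Finset.Iio i, (f i c * d c * e c j * z - z * (f i c * d c * e c j)))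
          + (d i * e i j * z - z * (d i * e i j)) := by
      rw [r1', add_mul, mul_add, Finset.sum_mul, Finset.mul_sum, Finset.sum_sub_distrib]
      abel
    have term : ∀ c ∈ Finset.Iio i,
        f i c * d c * e c j * z - z * (f i c * d c * e c j) = f i c * d c * e c j1 := by
      intro c hc
      rw [Finset.mem_Iio] at hc
      have hcv : (c : ℕ) < (i : ℕ) := Fin.lt_def.mp hc
      have hcj : (c : ℕ) < (j : ℕ) := by omega
      obtain ⟨hdc, hec, hfc⟩ := key c hcj
      rw [delta_right3 z (f i c) (d c) (e c j) (hfc i hc hijv) hdc,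
        IH (c : ℕ) (by omega) c rfl (Fin.lt_def.mpr hcj)]
    have hsum_eq : (∑ c ∈ Finset.Iio i, (f i c * d c * e c j * z - z * (f i c * d c * e c j)))
        = ∑ c ∈ Finset.Iio i, f i c * d c * e c j1 := Finset.sum_congr rfl term
    have final : (∑ c ∈ Finset.Iio i, f i c * d c * e c j1)
          + (d i * e i j * z - z * (d i * e i j))
        = (∑ c ∈ Finset.Iio i, f i c * d c * e c j1) + d i * e i j1 := by
      calc (∑ c ∈ Finset.Iio i, f i c * d c * e c j1)
            + (d i * e i j * z - z * (d i * e i j))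
          = (∑ c ∈ Finset.Iio i, (f i c * d c * e c j * z - z * (f i c * d c * e c j)))
            + (d i * e i j * z - z * (d i * e i j)) := by rw [hsum_eq]
        _ = s i j * z - z * s i j := expand.symm
        _ = s i j1 := hdelta
        _ = (∑ c ∈ Finset.Iio i, f i c * d c * e c j1) + d i * e i j1 := r2'
    have hcancel := add_left_cancel final
    rw [delta_right z (d i) (e i j) (key i hijv).1] at hcancel
    exact (d_isUnit hG i).mul_left_cancel hcancel

lemma f_step {N : ℕ} {s : Fin N → Fin N → PowerSeries A} {d : Fin N → PowerSeries A}
    {e f : Fin N → Fin N → PowerSeries A}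
    (hconst : HasDeltaConst s) (hquat : QuatRel s) (hG : IsGaussDecomp s d e f)
    (j j1 : Fin N) (hjj1 : (j1 : ℕ) = (j : ℕ) + 1) :
    ∀ i : Fin N, i < j →
      PowerSeries.C (PowerSeries.coeff 1 (s j1 j)) * f j i
        - f j i * PowerSeries.C (PowerSeries.coeff 1 (s j1 j)) = f j1 i := by
  set z := PowerSeries.C (PowerSeries.coeff 1 (s j1 j)) with hzdef
  have hz : ∀ a b : Fin N, (a : ℕ) < (j : ℕ) → (b : ℕ) < (j : ℕ) → Commute z (s a b) := by
    intro a b ha hb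
    have hst := star_series s hconst hquat a b j1 j
    rw [if_neg (Fin.ne_of_val_ne (by omega)), if_neg (Fin.ne_of_val_ne (by omega)),
      if_neg (Fin.ne_of_val_ne (by omega)), if_neg (Fin.ne_of_val_ne (by omega))] at hst
    have : s a b * z = z * s a b := by
      have h0 := sub_eq_zero.mp (by rw [hst]; abel)
      exact h0
    exact this.symm
  have key := key_comm hG z j hz
  suffices H : ∀ n : ℕ, ∀ i : Fin N, (i : ℕ) = n → i < j →
      z * f j i - f j i * z = f j1 i by
    intro i hij; exact H (i : ℕ) i rfl hij
  intro n
  induction n using Nat.strong_induction_on with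
  | _ n IH =>
    intro i hin hij
    have hijv : (i : ℕ) < (j : ℕ) := Fin.lt_def.mp hij
    have hdelta : z * s j i - s j i * z = s j1 i := by
      have hst := star_series s hconst hquat j i j1 j
      rw [if_neg (Fin.ne_of_val_ne (by omega)), if_pos rfl,
        if_neg (Fin.ne_of_val_ne (by omega)), if_neg (Fin.ne_of_val_ne (by omega))] at hst
      rw [← neg_sub (s j i * z) (z * s j i), hst]
      abel
    have r1 := gauss_repr2 hG j i
    rw [lowerMat_apply, if_neg (Fin.ne_of_val_ne (by omega)), if_pos hij] at r1
    have r1' : s j i = (∑ c ∈ Finset.Iio i, f j c * d c * e c i) + f j i * d i := by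
      rw [r1]
      congr 1
      refine Finset.sum_congr rfl fun c hc => ?_
      rw [Finset.mem_Iio] at hc
      have hcv : (c : ℕ) < (i : ℕ) := Fin.lt_def.mp hc
      rw [lowerMat_apply, if_neg (Fin.ne_of_val_ne (by omega)),
        if_pos (Fin.lt_def.mpr (by omega))]
    have r2 := gauss_repr2 hG j1 i
    rw [lowerMat_apply, if_neg (Fin.ne_of_val_ne (by omega)),
      if_pos (Fin.lt_def.mpr (by omega))] at r2
    have r2' : s j1 i = (∑ c ∈ Finset.Iio i, f j1 c * d c * e c i) + f j1 i * d i := by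
      rw [r2]
      congr 1
      refine Finset.sum_congr rfl fun c hc => ?_
      rw [Finset.mem_Iio] at hc
      have hcv : (c : ℕ) < (i : ℕ) := Fin.lt_def.mp hc
      rw [lowerMat_apply, if_neg (Fin.ne_of_val_ne (by omega)),
        if_pos (Fin.lt_def.mpr (by omega))]
    have expand : z * s j i - s j i * z
        = (∑ c ∈ Finset.Iio i, (z * (f j c * d c * e c i) - f j c * d c * e c i * z))
          + (z * (f j i * d i) - f j i * d i * z) := by
      rw [r1', add_mul, mul_add, Finset.sum_mul, Finset.mul_sum, Finset.sum_sub_distrib]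
      abel
    have term : ∀ c ∈ Finset.Iio i,
        z * (f j c * d c * e c i) - f j c * d c * e c i * z = f j1 c * d c * e c i := by
      intro c hc
      rw [Finset.mem_Iio] at hc
      have hcv : (c : ℕ) < (i : ℕ) := Fin.lt_def.mp hc
      have hcj : (c : ℕ) < (j : ℕ) := by omega
      obtain ⟨hdc, hec, hfc⟩ := key c hcj
      rw [delta_left3 z (f j c) (d c) (e c i) hdc (hec i hc hijv),
        IH (c : ℕ) (by omega) c rfl (Fin.lt_def.mpr hcj)]
    have hsum_eq : (∑ c ∈ Finset.Iio i, (z * (f j c * d c * e c i) - f j c * d c * e c i * z))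
        = ∑ c ∈ Finset.Iio i, f j1 c * d c * e c i := Finset.sum_congr rfl term
    have final : (∑ c ∈ Finset.Iio i, f j1 c * d c * e c i)
          + (z * (f j i * d i) - f j i * d i * z)
        = (∑ c ∈ Finset.Iio i, f j1 c * d c * e c i) + f j1 i * d i := by
      calc (∑ c ∈ Finset.Iio i, f j1 c * d c * e c i)
            + (z * (f j i * d i) - f j i * d i * z)
          = (∑ c ∈ Finset.Iio i, (z * (f j c * d c * e c i) - f j c * d c * e c i * z))
            + (z * (f j i * d i) - f j i * d i * z) := by rw [hsum_eq]
        _ = z * s j i - s j i * z := expand.symm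
        _ = s j1 i := hdelta
        _ = (∑ c ∈ Finset.Iio i, f j1 c * d c * e c i) + f j1 i * d i := r2'
    have hcancel := add_left_cancel final
    rw [delta_left z (f j i) (d i) (key i hijv).1] at hcancel
    exact (d_isUnit hG i).mul_right_cancel hcancel

lemma coeff_one_mul' (p q : PowerSeries A) :
    PowerSeries.coeff 1 (p * q)
      = PowerSeries.constantCoeff p * PowerSeries.coeff 1 q
        + PowerSeries.coeff 1 p * PowerSeries.constantCoeff q := by
  rw [PowerSeries.coeff_mul,
    show Finset.HasAntidiagonal.antidiagonal 1 = {(0, 1), (1, 0)} from rfl,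
    Finset.sum_pair (by decide)]
  simp only [PowerSeries.coeff_zero_eq_constantCoeff]

lemma coeff_one_e {N : ℕ} {s : Fin N → Fin N → PowerSeries A} {d : Fin N → PowerSeries A}
    {e f : Fin N → Fin N → PowerSeries A} (hG : IsGaussDecomp s d e f)
    (j j1 : Fin N) (hjj1 : j < j1) :
    PowerSeries.coeff 1 (s j j1) = PowerSeries.coeff 1 (e j j1) := by
  have r := gauss_repr1 hG j j1
  rw [upperMat_apply, if_neg (Fin.ne_of_lt hjj1), if_pos hjj1] at r
  rw [r, map_add, map_sum]
  have hterm : ∀ c ∈ Finset.Iio j, PowerSeries.coeff 1 (f j c * d c * upperMat e c j1) = 0 := by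
    intro c hc
    rw [Finset.mem_Iio] at hc
    have hcj1 : c < j1 := lt_trans hc hjj1
    rw [upperMat_apply, if_neg (Fin.ne_of_lt hcj1), if_pos hcj1, coeff_one_mul', map_mul,
      hG.f_const c j hc, zero_mul, zero_mul, hG.e_const c j1 hcj1, mul_zero, add_zero]
  rw [Finset.sum_eq_zero hterm, zero_add, coeff_one_mul', hG.d_const, one_mul,
    hG.e_const j j1 hjj1, mul_zero, add_zero]

lemma coeff_one_f {N : ℕ} {s : Fin N → Fin N → PowerSeries A} {d : Fin N → PowerSeries A}
    {e f : Fin N → Fin N → PowerSeries A} (hG : IsGaussDecomp s d e f)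
    (j j1 : Fin N) (hjj1 : j < j1) :
    PowerSeries.coeff 1 (s j1 j) = PowerSeries.coeff 1 (f j1 j) := by
  have r := gauss_repr2 hG j1 j
  rw [lowerMat_apply, if_neg (Ne.symm (Fin.ne_of_lt hjj1)), if_pos hjj1] at r
  rw [r, map_add, map_sum]
  have hterm : ∀ c ∈ Finset.Iio j, PowerSeries.coeff 1 (lowerMat f j1 c * d c * e c j) = 0 := by
    intro c hc
    rw [Finset.mem_Iio] at hc
    have hcj1 : c < j1 := lt_trans hc hjj1
    rw [lowerMat_apply, if_neg (Ne.symm (Fin.ne_of_lt hcj1)), if_pos hcj1, coeff_one_mul',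
      map_mul, hG.f_const c j1 hcj1, zero_mul, zero_mul, hG.e_const c j hc, mul_zero, add_zero]
  rw [Finset.sum_eq_zero hterm, zero_add, coeff_one_mul', hG.f_const j j1 hjj1, zero_mul,
    zero_add, hG.d_const, mul_one]


theorem statement_7 {A : Type*} [Ring A] [Algebra ℂ A] {N : ℕ}
    (s : Fin N → Fin N → PowerSeries A)
    (hconst : HasDeltaConst s) (hquat : QuatRel s)
    (d : Fin N → PowerSeries A) (e f : Fin N → Fin N → PowerSeries A)
    (hG : IsGaussDecomp s d e f) :
    (∀ (i j : Fin N) (hij : i < j) (hj : (j : ℕ) + 1 < N),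
        e i ⟨(j : ℕ) + 1, hj⟩
          = ⁅e i j, PowerSeries.C (PowerSeries.coeff 1 (e j ⟨(j : ℕ) + 1, hj⟩))⁆
        ∧ f ⟨(j : ℕ) + 1, hj⟩ i
          = ⁅PowerSeries.C (PowerSeries.coeff 1 (f ⟨(j : ℕ) + 1, hj⟩ j)), f j i⁆)
    ∧ (Algebra.adjoin ℂ
          {x : A | ∃ (i j : Fin N) (n : ℕ), x = PowerSeries.coeff n (s i j)} = ⊤ →
        Algebra.adjoin ℂ
          {x : A |
            (∃ (i : Fin N) (n : ℕ), x = PowerSeries.coeff n (d i))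
            ∨ (∃ (k : ℕ) (hk : k + 1 < N) (n : ℕ),
                x = PowerSeries.coeff n (e ⟨k, by omega⟩ ⟨k + 1, hk⟩))
            ∨ (∃ (k : ℕ) (hk : k + 1 < N) (n : ℕ),
                x = PowerSeries.coeff n (f ⟨k + 1, hk⟩ ⟨k, by omega⟩))} = ⊤) := by
  constructor
  · intro i j hij hj
    set j1 : Fin N := ⟨(j : ℕ) + 1, hj⟩ with hj1def
    have hlt : j < j1 := Fin.lt_def.mpr (by simp [hj1def])
    constructor
    · rw [Ring.lie_def, ← coeff_one_e hG j j1 hlt]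
      exact (e_step hconst hquat hG j j1 rfl i hij).symm
    · rw [Ring.lie_def, ← coeff_one_f hG j j1 hlt]
      exact (f_step hconst hquat hG j j1 rfl i hij).symm
  · intro hgen
    set G : Set A := {x : A |
        (∃ (i : Fin N) (n : ℕ), x = PowerSeries.coeff n (d i))
        ∨ (∃ (k : ℕ) (hk : k + 1 < N) (n : ℕ),
            x = PowerSeries.coeff n (e ⟨k, by omega⟩ ⟨k + 1, hk⟩))
        ∨ (∃ (k : ℕ) (hk : k + 1 < N) (n : ℕ),
            x = PowerSeries.coeff n (f ⟨k + 1, hk⟩ ⟨k, by omega⟩))} with hGdef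
    have hd_mem : ∀ (c : Fin N) (n : ℕ), PowerSeries.coeff n (d c) ∈ Algebra.adjoin ℂ G :=
      fun c n => Algebra.subset_adjoin (Or.inl ⟨c, n, rfl⟩)
    have he_gen : ∀ (a b : Fin N), a < b → (b : ℕ) = (a : ℕ) + 1 → ∀ n : ℕ,
        PowerSeries.coeff n (e a b) ∈ Algebra.adjoin ℂ G := by
      intro a b hab hba n
      apply Algebra.subset_adjoin
      right; left
      refine ⟨(a : ℕ), by omega, n, ?_⟩
      have h1 : (⟨(a : ℕ), by omega⟩ : Fin N) = a := by apply Fin.ext; rfl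
      have h2 : (⟨(a : ℕ) + 1, by omega⟩ : Fin N) = b := by apply Fin.ext; simp [hba]
      rw [h1, h2]
    have hf_gen : ∀ (a b : Fin N), a < b → (b : ℕ) = (a : ℕ) + 1 → ∀ n : ℕ,
        PowerSeries.coeff n (f b a) ∈ Algebra.adjoin ℂ G := by
      intro a b hab hba n
      apply Algebra.subset_adjoin
      right; right
      refine ⟨(a : ℕ), by omega, n, ?_⟩
      have h1 : (⟨(a : ℕ), by omega⟩ : Fin N) = a := by apply Fin.ext; rfl
      have h2 : (⟨(a : ℕ) + 1, by omega⟩ : Fin N) = b := by apply Fin.ext; simp [hba]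
      rw [h1, h2]
    have he_mem : ∀ (i j : Fin N), i < j → ∀ n : ℕ,
        PowerSeries.coeff n (e i j) ∈ Algebra.adjoin ℂ G := by
      suffices H : ∀ m : ℕ, ∀ i j : Fin N, (j : ℕ) = m → i < j → ∀ n : ℕ,
          PowerSeries.coeff n (e i j) ∈ Algebra.adjoin ℂ G from
        fun i j hij n => H (j : ℕ) i j rfl hij n
      intro m
      induction m using Nat.strong_induction_on with
      | _ m IH =>
        intro i j hjm hij n
        have hijv : (i : ℕ) < (j : ℕ) := Fin.lt_def.mp hij
        by_cases hc : (j : ℕ) = (i : ℕ) + 1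
        · exact he_gen i j hij hc n
        · have hij2 : (i : ℕ) + 1 < (j : ℕ) := by omega
          set j0 : Fin N := ⟨(j : ℕ) - 1, by omega⟩ with hj0def
          have hj0v : (j0 : ℕ) = (j : ℕ) - 1 := rfl
          have hij0 : i < j0 := Fin.lt_def.mpr (by omega)
          have hj0j : j0 < j := Fin.lt_def.mpr (by omega)
          have hjj0 : (j : ℕ) = (j0 : ℕ) + 1 := by omega
          have heq := e_step hconst hquat hG j0 j hjj0 i hij0
          rw [coeff_one_e hG j0 j hj0j] at heq
          have hy : PowerSeries.coeff 1 (e j0 j) ∈ Algebra.adjoin ℂ G :=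
            he_gen j0 j hj0j hjj0 1
          have hx : PowerSeries.coeff n (e i j0) ∈ Algebra.adjoin ℂ G :=
            IH (j0 : ℕ) (by omega) i j0 rfl hij0 n
          rw [← heq, map_sub, PowerSeries.coeff_mul_C, PowerSeries.coeff_C_mul]
          exact sub_mem (mul_mem hx hy) (mul_mem hy hx)
    have hf_mem : ∀ (i j : Fin N), i < j → ∀ n : ℕ,
        PowerSeries.coeff n (f j i) ∈ Algebra.adjoin ℂ G := by
      suffices H : ∀ m : ℕ, ∀ i j : Fin N, (j : ℕ) = m → i < j → ∀ n : ℕ,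
          PowerSeries.coeff n (f j i) ∈ Algebra.adjoin ℂ G from
        fun i j hij n => H (j : ℕ) i j rfl hij n
      intro m
      induction m using Nat.strong_induction_on with
      | _ m IH =>
        intro i j hjm hij n
        have hijv : (i : ℕ) < (j : ℕ) := Fin.lt_def.mp hij
        by_cases hc : (j : ℕ) = (i : ℕ) + 1
        · exact hf_gen i j hij hc n
        · have hij2 : (i : ℕ) + 1 < (j : ℕ) := by omega
          set j0 : Fin N := ⟨(j : ℕ) - 1, by omega⟩ with hj0def
          have hj0v : (j0 : ℕ) = (j : ℕ) - 1 := rfl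
          have hij0 : i < j0 := Fin.lt_def.mpr (by omega)
          have hj0j : j0 < j := Fin.lt_def.mpr (by omega)
          have hjj0 : (j : ℕ) = (j0 : ℕ) + 1 := by omega
          have heq := f_step hconst hquat hG j0 j hjj0 i hij0
          rw [coeff_one_f hG j0 j hj0j] at heq
          have hy : PowerSeries.coeff 1 (f j j0) ∈ Algebra.adjoin ℂ G :=
            hf_gen j0 j hj0j hjj0 1
          have hx : PowerSeries.coeff n (f j0 i) ∈ Algebra.adjoin ℂ G :=
            IH (j0 : ℕ) (by omega) i j0 rfl hij0 n
          rw [← heq, map_sub, PowerSeries.coeff_mul_C, PowerSeries.coeff_C_mul]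
          exact sub_mem (mul_mem hy hx) (mul_mem hx hy)
    have hmul : ∀ p q : PowerSeries A,
        (∀ n : ℕ, PowerSeries.coeff n p ∈ Algebra.adjoin ℂ G) →
        (∀ n : ℕ, PowerSeries.coeff n q ∈ Algebra.adjoin ℂ G) →
        ∀ n : ℕ, PowerSeries.coeff n (p * q) ∈ Algebra.adjoin ℂ G := by
      intro p q hp hq n
      rw [PowerSeries.coeff_mul]
      exact sum_mem fun x hx => mul_mem (hp _) (hq _)
    have hone : ∀ n : ℕ, PowerSeries.coeff n (1 : PowerSeries A) ∈ Algebra.adjoin ℂ G := by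
      intro n
      rw [PowerSeries.coeff_one]
      split_ifs
      · exact one_mem _
      · exact zero_mem _
    have hU : ∀ (c b : Fin N) (n : ℕ),
        PowerSeries.coeff n (upperMat e c b) ∈ Algebra.adjoin ℂ G := by
      intro c b n
      rw [upperMat_apply]
      split_ifs with h1 h2
      · exact hone n
      · exact he_mem c b h2 n
      · simp only [map_zero]; exact zero_mem _
    have hL : ∀ (a c : Fin N) (n : ℕ),
        PowerSeries.coeff n (lowerMat f a c) ∈ Algebra.adjoin ℂ G := by
      intro a c n
      rw [lowerMat_apply]
      split_ifs with h1 h2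
      · exact hone n
      · exact hf_mem c a h2 n
      · simp only [map_zero]; exact zero_mem _
    have hs_mem : ∀ (a b : Fin N) (n : ℕ),
        PowerSeries.coeff n (s a b) ∈ Algebra.adjoin ℂ G := by
      intro a b n
      rw [gauss_entry hG a b, map_sum]
      refine sum_mem fun c _ => ?_
      exact hmul _ _ (hmul _ _ (hL a c) (fun n => hd_mem c n)) (hU c b) n
    rw [eq_top_iff, ← hgen]
    apply Algebra.adjoin_le
    rintro x ⟨a, b, n, rfl⟩
    exact hs_mem a b n


end TY
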